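/- Define the disagreement perturbation d_{i−1} = (1/K) Σ_{k=1}^K ( h_k(𝒲_{k,i−1}) − h_k(w_{c,i−1}) ). Then for every i ≥ 1: E ‖d_{i−1}‖² ≤ (L̂²/K) · [ λ₂^{i−1} Σ_{k=1}^K ‖𝒲_{k,0} − w_{c,0}‖² + μ² (λ₂²/(1 − λ₂)²) K (B̂² + C²) ]. (This is the first half of the paper's perturbation-bounds lemma, Lemma 8, bounding the deviation of the network update from an exact centroid gradient step.) -/

import Mathlib

open MeasureTheory ProbabilityTheory Matrix

/-- Young-type inequality used in the contraction step. -/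
lemma dpb_young (a b la : ℝ) (h0 : 0 < la) (h1 : la < 1) :
    (la * a + la * b) ^ 2 ≤ la * a ^ 2 + la ^ 2 / (1 - la) * b ^ 2 := by
  have h2 : 0 < 1 - la := by linarith
  have hd : la ^ 2 / (1 - la) * b ^ 2 * (1 - la) = la ^ 2 * b ^ 2 := by
    field_simp
  have key : (la * a + la * b) ^ 2 * (1 - la)
      ≤ (la * a ^ 2 + la ^ 2 / (1 - la) * b ^ 2) * (1 - la) := by
    rw [add_mul, hd]
    nlinarith [sq_nonneg ((1 - la) * a - la * b), mul_pos h0 h2]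
  exact le_of_mul_le_mul_right key h2

/-- The ℓ²-operator norm of a matrix controls its action on vectors of
Euclidean-space-valued entries. -/
lemma dpb_matrix_bound {K M : ℕ} (B : Matrix (Fin K) (Fin K) ℝ)
    (v : Fin K → EuclideanSpace ℝ (Fin M)) :
    ∑ k, ‖∑ l, B k l • v l‖ ^ 2
      ≤ ‖Matrix.toEuclideanCLM (𝕜 := ℝ) B‖ ^ 2 * ∑ l, ‖v l‖ ^ 2 := by
  classical
  set c := ‖Matrix.toEuclideanCLM (𝕜 := ℝ) B‖ with hc
  have hc0 : 0 ≤ c := norm_nonneg _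
  have hnorm : ∀ (y : EuclideanSpace ℝ (Fin M)), ‖y‖ ^ 2 = ∑ m, (y m) ^ 2 := by
    intro y
    rw [EuclideanSpace.norm_eq]
    rw [Real.sq_sqrt (by positivity)]
    simp [sq_abs]
  have hnormK : ∀ (y : EuclideanSpace ℝ (Fin K)), ‖y‖ ^ 2 = ∑ m, (y m) ^ 2 := by
    intro y
    rw [EuclideanSpace.norm_eq]
    rw [Real.sq_sqrt (by positivity)]
    simp [sq_abs]
  calc ∑ k, ‖∑ l, B k l • v l‖ ^ 2
      = ∑ k, ∑ m, (∑ l, B k l * v l m) ^ 2 := by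
        refine Finset.sum_congr rfl fun k _ => ?_
        rw [hnorm]
        refine Finset.sum_congr rfl fun m _ => ?_
        congr 1
        induction (Finset.univ : Finset (Fin K)) using Finset.induction with
        | empty => rfl
        | insert _ _ h ih => rw [Finset.sum_insert h, Finset.sum_insert h, ← ih]; rfl
    _ = ∑ m, ∑ k, (∑ l, B k l * v l m) ^ 2 := Finset.sum_comm
    _ ≤ ∑ m : Fin M, c ^ 2 * ∑ l, (v l m) ^ 2 := by
        refine Finset.sum_le_sum fun m _ => ?_
        set x : EuclideanSpace ℝ (Fin K) := (WithLp.equiv _ _).symm (fun l => v l m) with hx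
        have happ : ∀ k, (Matrix.toEuclideanCLM (𝕜 := ℝ) B x) k = ∑ l, B k l * v l m := by
          intro k
          rw [hx, WithLp.equiv_symm_apply, Matrix.toEuclideanCLM_toLp]
          simp [Matrix.toLin'_apply, Matrix.mulVec, dotProduct]
        have hb : ‖Matrix.toEuclideanCLM (𝕜 := ℝ) B x‖ ≤ c * ‖x‖ :=
          (Matrix.toEuclideanCLM (𝕜 := ℝ) B).le_opNorm x
        have hb2 : ‖Matrix.toEuclideanCLM (𝕜 := ℝ) B x‖ ^ 2 ≤ c ^ 2 * ‖x‖ ^ 2 := by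
          rw [← mul_pow]
          exact pow_le_pow_left₀ (norm_nonneg _) hb 2
        rw [hnormK] at hb2
        simp_rw [happ] at hb2
        refine hb2.trans ?_
        rw [hnormK]
        refine mul_le_mul_of_nonneg_left (le_of_eq ?_) (by positivity)
        refine Finset.sum_congr rfl fun l _ => ?_
        rw [hx]
        rfl
    _ = c ^ 2 * ∑ l, ‖v l‖ ^ 2 := by
        rw [← Finset.mul_sum, Finset.sum_comm]
        congr 1
        refine Finset.sum_congr rfl fun l _ => (hnorm (v l)).symm

/-- Products of ℒ² functions are integrable. -/
lemma dpb_integrable_mul {Ω : Type*} [MeasurableSpace Ω] {P : Measure Ω}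
    {f g : Ω → ℝ} (hf : MemLp f 2 P) (hg : MemLp g 2 P) :
    Integrable (fun ω => f ω * g ω) P := by
  have := (hg.smul (hpqr := ENNReal.HolderTriple.of 2 2) hf)
  rw [ENNReal.inv_two_add_inv_two, inv_one, memLp_one_iff_integrable] at this
  exact this

/-- A coordinate (continuous linear functional) of an a.e. vanishing conditional
expectation also has vanishing conditional expectation. -/
lemma dpb_condexp_proj_zero {Ω : Type*} {m : MeasurableSpace Ω} [m0 : MeasurableSpace Ω]
    (P : Measure Ω) [IsProbabilityMeasure P] (hm : m ≤ m0) {M : ℕ}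
    {ξ : Ω → EuclideanSpace ℝ (Fin M)} (hint : Integrable ξ P)
    (hcond : P[ξ|m] =ᵐ[P] 0) (L : EuclideanSpace ℝ (Fin M) →L[ℝ] ℝ) :
    P[fun ω => L (ξ ω)|m] =ᵐ[P] 0 := by
  have hLint : Integrable (fun ω => L (ξ ω)) P := L.integrable_comp hint
  have hsm : AEStronglyMeasurable[m] (fun _ : Ω => (0 : ℝ)) P :=
    (@stronglyMeasurable_const Ω ℝ m _ 0).aestronglyMeasurable
  refine (ae_eq_condExp_of_forall_setIntegral_eq hm hLint
    (fun s _ _ => integrableOn_zero)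
    (fun s hs hμs => ?_) hsm).symm
  have h1 : ∫ ω in s, L (ξ ω) ∂P = L (∫ ω in s, ξ ω ∂P) :=
    L.integral_comp_comm hint.integrableOn
  have h2 : ∫ ω in s, ξ ω ∂P = ∫ ω in s, (P[ξ|m]) ω ∂P :=
    (setIntegral_condExp hm hint hs).symm
  have h3 : ∫ ω in s, (P[ξ|m]) ω ∂P = 0 := by
    rw [setIntegral_congr_ae (hm s hs) (hcond.mono fun ω hω _ => hω)]
    simp
  simp [h1, h2, h3]

/-- Orthogonality of an `m`-measurable square-integrable function against a
square-integrable function with vanishing conditional expectation. -/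
lemma dpb_cross_zero {Ω : Type*} {m : MeasurableSpace Ω} [m0 : MeasurableSpace Ω]
    (P : Measure Ω) [IsProbabilityMeasure P] (hm : m ≤ m0)
    {X ξ : Ω → ℝ} (hX : StronglyMeasurable[m] X) (hX2 : MemLp X 2 P)
    (hξ2 : MemLp ξ 2 P) (hcond : P[ξ|m] =ᵐ[P] 0) :
    ∫ ω, X ω * ξ ω ∂P = 0 := by
  have hint : Integrable (fun ω => X ω * ξ ω) P := dpb_integrable_mul hX2 hξ2
  have hmul := condExp_mul_of_stronglyMeasurable_left hX hint (hξ2.integrable one_le_two)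
  have hzero : P[fun ω => X ω * ξ ω|m] =ᵐ[P] 0 := by
    refine hmul.trans ?_
    filter_upwards [hcond] with ω hω
    simp only [Pi.mul_apply, Pi.zero_apply] at hω ⊢
    rw [hω]
    simp
  calc ∫ ω, X ω * ξ ω ∂P = ∫ ω, (P[fun ω => X ω * ξ ω|m]) ω ∂P :=
        (integral_condExp hm).symm
    _ = 0 := by rw [integral_congr_ae hzero]; simp

/-- Pointwise inner products of ℒ² functions are integrable. -/
lemma dpb_integrable_inner {Ω : Type*} [MeasurableSpace Ω] {P : Measure Ω}
    {M : ℕ} {f g : Ω → EuclideanSpace ℝ (Fin M)}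
    (hf : MemLp f 2 P) (hg : MemLp g 2 P) :
    Integrable (fun ω => (inner ℝ (f ω) (g ω) : ℝ)) P := by
  have := L2.integrable_inner (𝕜 := ℝ) (hf.toLp f) (hg.toLp g)
  refine this.congr ?_
  filter_upwards [hf.coeFn_toLp, hg.coeFn_toLp] with ω h1 h2
  rw [h1, h2]

/-- Coordinates of ℒ² Euclidean-valued functions are ℒ². -/
lemma dpb_memℒp_coord {Ω : Type*} [MeasurableSpace Ω] {P : Measure Ω} {M : ℕ}
    {f : Ω → EuclideanSpace ℝ (Fin M)} (hf : MemLp f 2 P) (m : Fin M) :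
    MemLp (fun ω => f ω m) 2 P := by
  have h1 := (EuclideanSpace.proj (𝕜 := ℝ) m).comp_memLp' hf
  exact h1

/-- Coordinate version of `dpb_condexp_proj_zero`. -/
lemma dpb_condexp_coord_zero {Ω : Type*} {m : MeasurableSpace Ω} [m0 : MeasurableSpace Ω]
    (P : Measure Ω) [IsProbabilityMeasure P] (hm : m ≤ m0) {M : ℕ}
    {ξ : Ω → EuclideanSpace ℝ (Fin M)} (hint : Integrable ξ P)
    (hcond : P[ξ|m] =ᵐ[P] 0) (m' : Fin M) :
    P[fun ω => ξ ω m'|m] =ᵐ[P] 0 := by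
  have h1 := dpb_condexp_proj_zero P hm hint hcond (EuclideanSpace.proj m')
  have he : (fun ω => (EuclideanSpace.proj (𝕜 := ℝ) m') (ξ ω)) = fun ω => ξ ω m' := by
    funext ω; simp
  rwa [he] at h1

set_option maxHeartbeats 2000000 in
/-- **Disagreement-perturbation bound (first half of Lemma 8 of Dif-MAML).**
With `d_i = (1/K) Σ_k (h_k(𝒲_{k,i}) − h_k(w_{c,i}))`, for every `i`,
`E‖d_i‖² ≤ (L̂²/K)[λ₂^i Σ_k‖𝒲_{k,0} − w_{c,0}‖² + μ²(λ₂²/(1−λ₂)²) K (B̂² + C²)]`. -/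
theorem disagreement_perturbation_bound
    (K M : ℕ) (hK : 0 < K) (μ Bhat C Lhat lam2 : ℝ)
    (hμ : 0 < μ) (hBhat : 0 < Bhat) (hC : 0 < C) (hLhat : 0 < Lhat)
    (A : Matrix (Fin K) (Fin K) ℝ)
    (hA_nonneg : ∀ k l, 0 ≤ A k l)
    (hA_row : ∀ k, ∑ l, A k l = 1)
    (hA_col : ∀ l, ∑ k, A k l = 1)
    (hlam : lam2 = ‖Matrix.toEuclideanCLM (𝕜 := ℝ)
      ((Aᵀ - (K : ℝ)⁻¹ • Matrix.of (fun _ _ => (1 : ℝ))) : Matrix (Fin K) (Fin K) ℝ)‖)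
    (hlam_pos : 0 < lam2) (hlam_lt : lam2 < 1)
    {Ω : Type*} [MeasurableSpace Ω] (P : Measure Ω) [IsProbabilityMeasure P]
    (W : ℕ → Fin K → Ω → EuclideanSpace ℝ (Fin M))
    (g : ℕ → Fin K → Ω → EuclideanSpace ℝ (Fin M))
    (W0 : Fin K → EuclideanSpace ℝ (Fin M))
    (h : Fin K → EuclideanSpace ℝ (Fin M) → EuclideanSpace ℝ (Fin M))
    (F : ℕ → MeasurableSpace Ω)
    (hF : ∀ i, F i = ⨆ (k : Fin K) (j : ℕ) (_ : j ≤ i),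
      MeasurableSpace.comap (W j k) inferInstance)
    (hW0 : ∀ k ω, W 0 k ω = W0 k)
    (hWmeas : ∀ i k, Measurable (W i k))
    (hgmeas : ∀ i k, Measurable (g i k))
    (hhmeas : ∀ k, Measurable (h k))
    (hhbound : ∀ k u, ‖h k u‖ ≤ Bhat)
    (hhlip : ∀ k u v, ‖h k u - h k v‖ ≤ Lhat * ‖u - v‖)
    (hg_unbiased : ∀ i k,
      P[g (i + 1) k | F i] =ᵐ[P] fun ω => h k (W i k ω))
    (hg_var : ∀ i k, ∀ᵐ ω ∂P,
      (P[fun ω' => ‖g (i + 1) k ω' - h k (W i k ω')‖ ^ 2 | F i]) ω ≤ C ^ 2)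
    (hrec : ∀ i k ω, W (i + 1) k ω = ∑ l, A l k • (W i l ω - μ • g (i + 1) l ω))
    (hWint : ∀ i k, Integrable (fun ω =>
      ‖W i k ω - (K : ℝ)⁻¹ • ∑ j, W i j ω‖ ^ 2) P)
    (hgint : ∀ i k, Integrable (g i k) P)
    (hgint2 : ∀ i k, Integrable (fun ω => ‖g (i + 1) k ω - h k (W i k ω)‖ ^ 2) P)
    (hdint : ∀ i, Integrable (fun ω =>
      ‖(K : ℝ)⁻¹ • ∑ k, (h k (W i k ω) - h k ((K : ℝ)⁻¹ • ∑ j, W i j ω))‖ ^ 2) P) :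
    ∀ i, ∫ ω, ‖(K : ℝ)⁻¹ • ∑ k, (h k (W i k ω) - h k ((K : ℝ)⁻¹ • ∑ j, W i j ω))‖ ^ 2 ∂P
      ≤ (Lhat ^ 2 / K) * (lam2 ^ i * ∑ k, ‖W0 k - (K : ℝ)⁻¹ • ∑ j, W0 j‖ ^ 2
        + μ ^ 2 * (lam2 ^ 2 / (1 - lam2) ^ 2) * K * (Bhat ^ 2 + C ^ 2)) := by
  classical
  have hKR : (0 : ℝ) < (K : ℝ) := by exact_mod_cast hK
  have hlam0 : (0 : ℝ) ≤ lam2 := hlam_pos.le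
  have h1l : (0 : ℝ) < 1 - lam2 := by linarith
  -- the centered matrix
  set B : Matrix (Fin K) (Fin K) ℝ :=
    Aᵀ - (K : ℝ)⁻¹ • Matrix.of (fun _ _ => (1 : ℝ)) with hBdef
  have hBapp : ∀ k l, B k l = A l k - (K : ℝ)⁻¹ := by
    intro k l
    simp [hBdef, Matrix.sub_apply, Matrix.transpose_apply, Matrix.smul_apply,
      Matrix.of_apply, smul_eq_mul, mul_one]
  have hBsum : ∀ k, ∑ l, B k l = 0 := by
    intro k
    simp_rw [hBapp]
    rw [Finset.sum_sub_distrib, hA_col k, Finset.sum_const, Finset.card_univ,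
      Fintype.card_fin, nsmul_eq_mul, mul_inv_cancel₀ hKR.ne', sub_self]
  -- notation
  set cent : ℕ → Ω → EuclideanSpace ℝ (Fin M) :=
    fun i ω => (K : ℝ)⁻¹ • ∑ j, W i j ω with hcent
  set D : ℕ → Fin K → Ω → EuclideanSpace ℝ (Fin M) :=
    fun i k ω => W i k ω - cent i ω with hD
  set S : ℕ → ℝ := fun i => ∑ k, ∫ ω, ‖D i k ω‖ ^ 2 ∂P with hS
  -- measure theoretic infrastructure
  have hFle : ∀ i, F i ≤ (inferInstance : MeasurableSpace Ω) := by
    intro i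
    rw [hF i]
    exact iSup_le fun k => iSup_le fun j => iSup_le fun _ => (hWmeas j k).comap_le
  have hWFi : ∀ i k, Measurable[F i] (W i k) := by
    intro i k
    refine Measurable.of_comap_le ?_
    rw [hF i]
    have h1 : MeasurableSpace.comap (W i k) inferInstance
        ≤ ⨆ (j : ℕ) (_ : j ≤ i), MeasurableSpace.comap (W j k) inferInstance :=
      le_iSup_of_le i (le_iSup_of_le le_rfl le_rfl)
    exact h1.trans (le_iSup (fun k => ⨆ (j : ℕ) (_ : j ≤ i),
      MeasurableSpace.comap (W j k) inferInstance) k)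
  have hDmeas : ∀ i k, Measurable (D i k) := fun i k =>
    (hWmeas i k).sub ((Finset.measurable_sum _ fun j _ => hWmeas i j).fun_const_smul _)
  have hD2 : ∀ i k, MemLp (D i k) 2 P := fun i k =>
    (memLp_two_iff_integrable_sq_norm (hDmeas i k).aestronglyMeasurable).mpr (hWint i k)
  have hHmeas : ∀ i k, Measurable (fun ω => h k (W i k ω)) := fun i k =>
    (hhmeas k).comp (hWmeas i k)
  have hH2 : ∀ i k, MemLp (fun ω => h k (W i k ω)) 2 P := fun i k =>
    (memLp_top_of_bound (hHmeas i k).aestronglyMeasurable Bhat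
      (Filter.Eventually.of_forall fun ω => hhbound k _)).mono_exponent le_top
  have hHint : ∀ i k, Integrable (fun ω => h k (W i k ω)) P := fun i k =>
    (hH2 i k).integrable one_le_two
  have hξmeas : ∀ i k, Measurable (fun ω => g (i + 1) k ω - h k (W i k ω)) := fun i k =>
    (hgmeas (i + 1) k).sub (hHmeas i k)
  have hξ2 : ∀ i k, MemLp (fun ω => g (i + 1) k ω - h k (W i k ω)) 2 P := fun i k =>
    (memLp_two_iff_integrable_sq_norm (hξmeas i k).aestronglyMeasurable).mpr (hgint2 i k)
  have hξint : ∀ i k, Integrable (fun ω => g (i + 1) k ω - h k (W i k ω)) P := fun i k =>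
    (hξ2 i k).integrable one_le_two
  -- conditional expectation of the noise vanishes
  have hcondξ : ∀ i k, P[fun ω => g (i + 1) k ω - h k (W i k ω)|F i] =ᵐ[P] 0 := by
    intro i k
    have hsm : StronglyMeasurable[F i] (fun ω => h k (W i k ω)) :=
      ((hhmeas k).comp (hWFi i k)).stronglyMeasurable
    have h1 : P[(fun ω => g (i + 1) k ω) - (fun ω => h k (W i k ω))|F i]
        =ᵐ[P] P[g (i + 1) k|F i] - P[fun ω => h k (W i k ω)|F i] :=
      condExp_sub (hgint (i + 1) k) (hHint i k) (F i)
    have h2 : P[fun ω => h k (W i k ω)|F i] = fun ω => h k (W i k ω) :=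
      condExp_of_stronglyMeasurable (hFle i) hsm (hHint i k)
    refine h1.trans ?_
    filter_upwards [hg_unbiased i k] with ω hω1
    simp only [Pi.sub_apply, Pi.zero_apply, hω1, h2, sub_self]
  -- noise second moment bound
  have hξvar : ∀ i k, ∫ ω, ‖g (i + 1) k ω - h k (W i k ω)‖ ^ 2 ∂P ≤ C ^ 2 := by
    intro i k
    have h1 : ∫ ω, ‖g (i + 1) k ω - h k (W i k ω)‖ ^ 2 ∂P
        = ∫ ω, (P[fun ω' => ‖g (i + 1) k ω' - h k (W i k ω')‖ ^ 2|F i]) ω ∂P :=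
      (integral_condExp (hFle i)).symm
    rw [h1]
    calc ∫ ω, (P[fun ω' => ‖g (i + 1) k ω' - h k (W i k ω')‖ ^ 2|F i]) ω ∂P
        ≤ ∫ _, C ^ 2 ∂P :=
          integral_mono_ae integrable_condExp (integrable_const _) (hg_var i k)
      _ = C ^ 2 := by simp
  -- the one-step recursion for the disagreement vector
  set c1 : ℝ := μ ^ 2 * lam2 ^ 2 * K * (Bhat ^ 2 + C ^ 2) / (1 - lam2) with hc1
  have hc1nn : 0 ≤ c1 := by positivity
  have hstep : ∀ i, S (i + 1) ≤ lam2 * S i + c1 := by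
    intro i
    set Y : Fin K → Ω → EuclideanSpace ℝ (Fin M) :=
      fun k ω => ∑ l, B k l • (D i l ω - μ • h l (W i l ω)) with hYdef
    set Z : Fin K → Ω → EuclideanSpace ℝ (Fin M) :=
      fun k ω => ∑ l, B k l • (g (i + 1) l ω - h l (W i l ω)) with hZdef
    -- the exact recursion D_{i+1} = Y - μ Z
    have hDrec : ∀ k ω, D (i + 1) k ω = Y k ω - μ • Z k ω := by
      intro k ω
      have hsum : ∑ j, W (i + 1) j ω = ∑ l, (W i l ω - μ • g (i + 1) l ω) := by
        simp_rw [hrec i]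
        rw [Finset.sum_comm]
        refine Finset.sum_congr rfl fun l _ => ?_
        rw [← Finset.sum_smul, hA_row l, one_smul]
      have hD1 : D (i + 1) k ω = ∑ l, B k l • (W i l ω - μ • g (i + 1) l ω) := by
        simp only [hD, hcent]
        rw [hrec i k ω, hsum, Finset.smul_sum, ← Finset.sum_sub_distrib]
        refine Finset.sum_congr rfl fun l _ => ?_
        rw [hBapp, sub_smul]
      have hzero : (∑ l, B k l • cent i ω) = 0 := by
        rw [← Finset.sum_smul, hBsum k, zero_smul]
      have hYZ : Y k ω - μ • Z k ω
          = ∑ l, (B k l • (W i l ω - μ • g (i + 1) l ω) - B k l • cent i ω) := by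
        simp only [hYdef, hZdef]
        rw [Finset.smul_sum, ← Finset.sum_sub_distrib]
        refine Finset.sum_congr rfl fun l _ => ?_
        rw [smul_comm μ (B k l), ← smul_sub, ← smul_sub]
        congr 1
        simp only [hD]
        rw [smul_sub μ]
        abel
      rw [hD1, hYZ, Finset.sum_sub_distrib, hzero, sub_zero]
    -- ℒ² facts
    have hY2 : ∀ k, MemLp (Y k) 2 P := by
      intro k
      refine memLp_finsetSum _ fun l _ => ?_
      exact (((hD2 i l).sub ((hH2 i l).const_smul μ)).const_smul (B k l))
    have hZ2 : ∀ k, MemLp (Z k) 2 P := by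
      intro k
      refine memLp_finsetSum _ fun l _ => ?_
      exact ((hξ2 i l).const_smul (B k l))
    have hYint2 : ∀ k, Integrable (fun ω => ‖Y k ω‖ ^ 2) P := fun k =>
      (memLp_two_iff_integrable_sq_norm (hY2 k).aestronglyMeasurable).mp (hY2 k)
    have hZint2 : ∀ k, Integrable (fun ω => ‖Z k ω‖ ^ 2) P := fun k =>
      (memLp_two_iff_integrable_sq_norm (hZ2 k).aestronglyMeasurable).mp (hZ2 k)
    -- Y is measurable with respect to F i
    have hDFi : ∀ l, Measurable[F i] (D i l) := fun l =>
      (hWFi i l).sub ((Finset.measurable_sum _ fun j _ => hWFi i j).fun_const_smul _)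
    have hYFi : ∀ k, Measurable[F i] (Y k) := by
      intro k
      refine Finset.measurable_sum _ fun l _ => ?_
      exact ((hDFi l).sub (((hhmeas l).comp (hWFi i l)).fun_const_smul μ)).fun_const_smul (B k l)
    -- cross terms vanish
    have hcross : ∀ k, ∫ ω, (inner ℝ (Y k ω) (Z k ω) : ℝ) ∂P = 0 := by
      intro k
      have hzeroinner : ∀ l, ∫ ω,
          (inner ℝ (Y k ω) (g (i + 1) l ω - h l (W i l ω)) : ℝ) ∂P = 0 := by
        intro l
        have hcoord : (fun ω => (inner ℝ (Y k ω) (g (i + 1) l ω - h l (W i l ω)) : ℝ))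
            = fun ω => ∑ m, Y k ω m * (g (i + 1) l ω - h l (W i l ω)) m := by
          funext ω
          simp [PiLp.inner_apply, RCLike.inner_apply, conj_trivial, mul_comm]
        rw [hcoord, integral_finset_sum _ (fun m _ => dpb_integrable_mul
          (dpb_memℒp_coord (hY2 k) m) (dpb_memℒp_coord (hξ2 i l) m))]
        refine Finset.sum_eq_zero fun m _ => ?_
        refine dpb_cross_zero P (hFle i)
          ?_ (dpb_memℒp_coord (hY2 k) m) (dpb_memℒp_coord (hξ2 i l) m)
          (dpb_condexp_coord_zero P (hFle i) (hξint i l) (hcondξ i l) m)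
        have h2 := (EuclideanSpace.proj (𝕜 := ℝ) m).continuous.comp_stronglyMeasurable
          (Measurable.stronglyMeasurable (hYFi k))
        simpa [Function.comp] using h2
      have h1 : (fun ω => (inner ℝ (Y k ω) (Z k ω) : ℝ))
          = fun ω => ∑ l, B k l *
            (inner ℝ (Y k ω) (g (i + 1) l ω - h l (W i l ω)) : ℝ) := by
        funext ω
        simp only [hZdef]
        rw [inner_sum]
        refine Finset.sum_congr rfl fun l _ => ?_
        rw [real_inner_smul_right]
      rw [h1, integral_finset_sum _ (fun l _ =>
        (dpb_integrable_inner (hY2 k) (hξ2 i l)).const_mul _)]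
      refine Finset.sum_eq_zero fun l _ => ?_
      rw [integral_const_mul, hzeroinner l, mul_zero]
    -- expansion of the square
    have hexp : ∀ k, ∫ ω, ‖D (i + 1) k ω‖ ^ 2 ∂P
        = ∫ ω, ‖Y k ω‖ ^ 2 ∂P + μ ^ 2 * ∫ ω, ‖Z k ω‖ ^ 2 ∂P := by
      intro k
      have hpt : ∀ ω, ‖D (i + 1) k ω‖ ^ 2
          = ‖Y k ω‖ ^ 2 - (2 * μ) * (inner ℝ (Y k ω) (Z k ω) : ℝ)
            + μ ^ 2 * ‖Z k ω‖ ^ 2 := by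
        intro ω
        rw [hDrec k ω, norm_sub_sq_real, real_inner_smul_right, norm_smul]
        simp [abs_of_pos hμ, mul_pow]
        ring
      have hrw : (fun ω => ‖D (i + 1) k ω‖ ^ 2)
          = fun ω => ‖Y k ω‖ ^ 2 - (2 * μ) * (inner ℝ (Y k ω) (Z k ω) : ℝ)
            + μ ^ 2 * ‖Z k ω‖ ^ 2 := funext hpt
      calc ∫ ω, ‖D (i + 1) k ω‖ ^ 2 ∂P
          = ∫ ω, (‖Y k ω‖ ^ 2 - (2 * μ) * (inner ℝ (Y k ω) (Z k ω) : ℝ)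
              + μ ^ 2 * ‖Z k ω‖ ^ 2) ∂P := by rw [hrw]
        _ = (∫ ω, (‖Y k ω‖ ^ 2 - (2 * μ) * (inner ℝ (Y k ω) (Z k ω) : ℝ)) ∂P)
              + ∫ ω, μ ^ 2 * ‖Z k ω‖ ^ 2 ∂P := by
            refine integral_add ?_ ((hZint2 k).const_mul _)
            exact (hYint2 k).sub ((dpb_integrable_inner (hY2 k) (hZ2 k)).const_mul _)
        _ = (∫ ω, ‖Y k ω‖ ^ 2 ∂P) - (2 * μ) * (∫ ω, (inner ℝ (Y k ω) (Z k ω) : ℝ) ∂P)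
              + μ ^ 2 * ∫ ω, ‖Z k ω‖ ^ 2 ∂P := by
            rw [integral_sub (hYint2 k) ((dpb_integrable_inner (hY2 k) (hZ2 k)).const_mul _),
              integral_const_mul, integral_const_mul]
        _ = ∫ ω, ‖Y k ω‖ ^ 2 ∂P + μ ^ 2 * ∫ ω, ‖Z k ω‖ ^ 2 ∂P := by
            rw [hcross k, mul_zero, sub_zero]
    -- summed bounds
    have hDint2 : ∀ l, Integrable (fun ω => ‖D i l ω‖ ^ 2) P := fun l =>
      (memLp_two_iff_integrable_sq_norm (hD2 i l).aestronglyMeasurable).mp (hD2 i l)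
    have hDmuH2 : ∀ l, MemLp (fun ω => D i l ω - μ • h l (W i l ω)) 2 P := fun l =>
      (hD2 i l).sub ((hH2 i l).const_smul μ)
    have hDmuHint2 : ∀ l, Integrable (fun ω => ‖D i l ω - μ • h l (W i l ω)‖ ^ 2) P :=
      fun l => (memLp_two_iff_integrable_sq_norm (hDmuH2 l).aestronglyMeasurable).mp (hDmuH2 l)
    have hξint2 : ∀ l, Integrable (fun ω => ‖g (i + 1) l ω - h l (W i l ω)‖ ^ 2) P :=
      fun l => hgint2 i l
    have hYsum : ∑ k, ∫ ω, ‖Y k ω‖ ^ 2 ∂P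
        ≤ lam2 * S i + (K : ℝ) * (lam2 ^ 2 / (1 - lam2) * (μ * Bhat) ^ 2) := by
      have h1 : ∑ k, ∫ ω, ‖Y k ω‖ ^ 2 ∂P = ∫ ω, ∑ k, ‖Y k ω‖ ^ 2 ∂P :=
        (integral_finset_sum _ fun k _ => hYint2 k).symm
      have hpt : ∀ ω, ∑ k, ‖Y k ω‖ ^ 2
          ≤ ∑ l, (lam2 * ‖D i l ω‖ ^ 2 + lam2 ^ 2 / (1 - lam2) * (μ * Bhat) ^ 2) := by
        intro ω
        have h2 := dpb_matrix_bound B (fun l => D i l ω - μ • h l (W i l ω))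
        rw [← hlam] at h2
        have h3 : ∑ k, ‖Y k ω‖ ^ 2
            ≤ lam2 ^ 2 * ∑ l, ‖D i l ω - μ • h l (W i l ω)‖ ^ 2 := by
          simp only [hYdef]
          exact h2
        refine h3.trans ?_
        rw [Finset.mul_sum]
        refine Finset.sum_le_sum fun l _ => ?_
        have hab : ‖D i l ω - μ • h l (W i l ω)‖ ≤ ‖D i l ω‖ + μ * Bhat := by
          refine (norm_sub_le _ _).trans ?_
          refine add_le_add le_rfl ?_
          rw [norm_smul, Real.norm_eq_abs, abs_of_pos hμ]
          exact mul_le_mul_of_nonneg_left (hhbound l _) hμ.le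
        have h4 : lam2 ^ 2 * ‖D i l ω - μ • h l (W i l ω)‖ ^ 2
            ≤ (lam2 * ‖D i l ω‖ + lam2 * (μ * Bhat)) ^ 2 := by
          have h5 : ‖D i l ω - μ • h l (W i l ω)‖ ^ 2 ≤ (‖D i l ω‖ + μ * Bhat) ^ 2 :=
            pow_le_pow_left₀ (norm_nonneg _) hab 2
          calc lam2 ^ 2 * ‖D i l ω - μ • h l (W i l ω)‖ ^ 2
              ≤ lam2 ^ 2 * (‖D i l ω‖ + μ * Bhat) ^ 2 :=
                mul_le_mul_of_nonneg_left h5 (by positivity)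
            _ = (lam2 * ‖D i l ω‖ + lam2 * (μ * Bhat)) ^ 2 := by ring
        refine h4.trans ?_
        exact dpb_young _ _ _ hlam_pos hlam_lt
      have h6 : Integrable (fun ω => ∑ l,
          (lam2 * ‖D i l ω‖ ^ 2 + lam2 ^ 2 / (1 - lam2) * (μ * Bhat) ^ 2)) P :=
        integrable_finset_sum _ fun l _ => ((hDint2 l).const_mul _).add (integrable_const _)
      have h7 : ∫ ω, ∑ k, ‖Y k ω‖ ^ 2 ∂P ≤ ∫ ω, ∑ l,
          (lam2 * ‖D i l ω‖ ^ 2 + lam2 ^ 2 / (1 - lam2) * (μ * Bhat) ^ 2) ∂P :=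
        integral_mono (integrable_finset_sum _ fun k _ => hYint2 k) h6 hpt
      rw [h1]
      refine h7.trans (le_of_eq ?_)
      have h9 := integral_finset_sum (μ := P) Finset.univ
        (f := fun l (ω : Ω) => lam2 * ‖D i l ω‖ ^ 2 + lam2 ^ 2 / (1 - lam2) * (μ * Bhat) ^ 2)
        (fun l _ => ((hDint2 l).const_mul _).add (integrable_const _))
      rw [h9]
      have h8 : ∀ l : Fin K, ∫ ω,
          (lam2 * ‖D i l ω‖ ^ 2 + lam2 ^ 2 / (1 - lam2) * (μ * Bhat) ^ 2) ∂P
          = lam2 * (∫ ω, ‖D i l ω‖ ^ 2 ∂P) + lam2 ^ 2 / (1 - lam2) * (μ * Bhat) ^ 2 := by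
        intro l
        rw [integral_add ((hDint2 l).const_mul _) (integrable_const _), integral_const_mul]
        simp
      simp_rw [h8]
      rw [Finset.sum_add_distrib, ← Finset.mul_sum, Finset.sum_const, Finset.card_univ,
        Fintype.card_fin, nsmul_eq_mul, hS]
    have hZsum : ∑ k, ∫ ω, ‖Z k ω‖ ^ 2 ∂P ≤ lam2 ^ 2 * ((K : ℝ) * C ^ 2) := by
      have h1 : ∑ k, ∫ ω, ‖Z k ω‖ ^ 2 ∂P = ∫ ω, ∑ k, ‖Z k ω‖ ^ 2 ∂P :=
        (integral_finset_sum _ fun k _ => hZint2 k).symm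
      have hpt : ∀ ω, ∑ k, ‖Z k ω‖ ^ 2
          ≤ lam2 ^ 2 * ∑ l, ‖g (i + 1) l ω - h l (W i l ω)‖ ^ 2 := by
        intro ω
        have h2 := dpb_matrix_bound B (fun l => g (i + 1) l ω - h l (W i l ω))
        rw [← hlam] at h2
        simp only [hZdef]
        exact h2
      have h6 : Integrable (fun ω => lam2 ^ 2 *
          ∑ l, ‖g (i + 1) l ω - h l (W i l ω)‖ ^ 2) P :=
        (integrable_finset_sum _ fun l _ => hξint2 l).const_mul _
      have h7 := integral_mono (integrable_finset_sum _ fun k _ => hZint2 k) h6 hpt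
      rw [h1]
      refine h7.trans ?_
      rw [integral_const_mul, integral_finset_sum _ fun l _ => hξint2 l]
      refine mul_le_mul_of_nonneg_left ?_ (by positivity)
      calc ∑ l, ∫ ω, ‖g (i + 1) l ω - h l (W i l ω)‖ ^ 2 ∂P
          ≤ ∑ _l : Fin K, C ^ 2 := Finset.sum_le_sum fun l _ => hξvar i l
        _ = (K : ℝ) * C ^ 2 := by
            rw [Finset.sum_const, Finset.card_univ, Fintype.card_fin, nsmul_eq_mul]
    have hSsum : S (i + 1) = (∑ k, ∫ ω, ‖Y k ω‖ ^ 2 ∂P)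
        + μ ^ 2 * ∑ k, ∫ ω, ‖Z k ω‖ ^ 2 ∂P := by
      rw [hS]
      simp_rw [hexp]
      rw [Finset.sum_add_distrib, ← Finset.mul_sum]
    rw [hSsum, hc1]
    have hZ' : μ ^ 2 * ∑ k, ∫ ω, ‖Z k ω‖ ^ 2 ∂P ≤ μ ^ 2 * (lam2 ^ 2 * ((K : ℝ) * C ^ 2)) :=
      mul_le_mul_of_nonneg_left hZsum (by positivity)
    have hfin : lam2 * S i + (K : ℝ) * (lam2 ^ 2 / (1 - lam2) * (μ * Bhat) ^ 2)
        + μ ^ 2 * (lam2 ^ 2 * ((K : ℝ) * C ^ 2))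
        ≤ lam2 * S i + μ ^ 2 * lam2 ^ 2 * K * (Bhat ^ 2 + C ^ 2) / (1 - lam2) := by
      have hC2 : μ ^ 2 * (lam2 ^ 2 * ((K : ℝ) * C ^ 2))
          ≤ μ ^ 2 * lam2 ^ 2 * (K : ℝ) * C ^ 2 / (1 - lam2) := by
        rw [le_div_iff₀ h1l]
        have hX : 0 ≤ μ ^ 2 * (lam2 ^ 2 * ((K : ℝ) * C ^ 2)) := by positivity
        nlinarith [hX, hlam0]
      have hB2 : (K : ℝ) * (lam2 ^ 2 / (1 - lam2) * (μ * Bhat) ^ 2)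
          = μ ^ 2 * lam2 ^ 2 * (K : ℝ) * Bhat ^ 2 / (1 - lam2) := by
        field_simp
      rw [hB2]
      have : μ ^ 2 * lam2 ^ 2 * (K : ℝ) * Bhat ^ 2 / (1 - lam2)
          + μ ^ 2 * lam2 ^ 2 * (K : ℝ) * C ^ 2 / (1 - lam2)
          = μ ^ 2 * lam2 ^ 2 * (K : ℝ) * (Bhat ^ 2 + C ^ 2) / (1 - lam2) := by
        field_simp
      linarith [hC2]
    refine le_trans ?_ hfin
    linarith [hYsum, hZ']
  -- the closed-form bound by induction
  set S0 : ℝ := ∑ k, ‖W0 k - (K : ℝ)⁻¹ • ∑ j, W0 j‖ ^ 2 with hS0def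
  have hS0 : S 0 = S0 := by
    rw [hS, hS0def]
    refine Finset.sum_congr rfl fun k _ => ?_
    have he : (fun ω => ‖D 0 k ω‖ ^ 2)
        = fun _ : Ω => ‖W0 k - (K : ℝ)⁻¹ • ∑ j, W0 j‖ ^ 2 := by
      funext ω
      simp only [hD, hcent, hW0]
    rw [he, integral_const]
    simp
  have hS0nn : 0 ≤ S0 := Finset.sum_nonneg fun k _ => by positivity
  have hSbound : ∀ i, S i ≤ lam2 ^ i * S0 + c1 / (1 - lam2) := by
    intro i
    induction i with
    | zero =>
        rw [pow_zero, one_mul, hS0]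
        have : 0 ≤ c1 / (1 - lam2) := div_nonneg hc1nn h1l.le
        linarith
    | succ n ih =>
        calc S (n + 1) ≤ lam2 * S n + c1 := hstep n
          _ ≤ lam2 * (lam2 ^ n * S0 + c1 / (1 - lam2)) + c1 := by
              have := mul_le_mul_of_nonneg_left ih hlam0
              linarith
          _ = lam2 ^ (n + 1) * S0 + (lam2 * (c1 / (1 - lam2)) + c1) := by ring
          _ = lam2 ^ (n + 1) * S0 + c1 / (1 - lam2) := by
              congr 1
              field_simp
              ring
  -- conclusion
  intro i
  have hDint2 : ∀ k, Integrable (fun ω => ‖D i k ω‖ ^ 2) P := fun k =>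
    (memLp_two_iff_integrable_sq_norm (hD2 i k).aestronglyMeasurable).mp (hD2 i k)
  have hpt : ∀ ω, ‖(K : ℝ)⁻¹ • ∑ k, (h k (W i k ω)
        - h k ((K : ℝ)⁻¹ • ∑ j, W i j ω))‖ ^ 2
      ≤ Lhat ^ 2 / K * ∑ k, ‖D i k ω‖ ^ 2 := by
    intro ω
    have h0 : ‖(K : ℝ)⁻¹ • ∑ k, (h k (W i k ω) - h k ((K : ℝ)⁻¹ • ∑ j, W i j ω))‖
        = (K : ℝ)⁻¹ * ‖∑ k, (h k (W i k ω) - h k ((K : ℝ)⁻¹ • ∑ j, W i j ω))‖ := by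
      rw [norm_smul, Real.norm_eq_abs, abs_of_pos (inv_pos.mpr hKR)]
    have h1 : ‖∑ k, (h k (W i k ω) - h k ((K : ℝ)⁻¹ • ∑ j, W i j ω))‖
        ≤ ∑ k, Lhat * ‖D i k ω‖ := by
      refine (norm_sum_le _ _).trans (Finset.sum_le_sum fun k _ => ?_)
      have := hhlip k (W i k ω) ((K : ℝ)⁻¹ • ∑ j, W i j ω)
      simpa only [hD, hcent] using this
    have h2 : (∑ k, Lhat * ‖D i k ω‖) ^ 2 ≤ (K : ℝ) * ∑ k, (Lhat * ‖D i k ω‖) ^ 2 := by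
      have := sq_sum_le_card_mul_sum_sq (s := (Finset.univ : Finset (Fin K)))
        (f := fun k => Lhat * ‖D i k ω‖)
      simpa [Finset.card_univ] using this
    calc ‖(K : ℝ)⁻¹ • ∑ k, (h k (W i k ω) - h k ((K : ℝ)⁻¹ • ∑ j, W i j ω))‖ ^ 2
        = ((K : ℝ)⁻¹) ^ 2 * ‖∑ k, (h k (W i k ω)
            - h k ((K : ℝ)⁻¹ • ∑ j, W i j ω))‖ ^ 2 := by rw [h0, mul_pow]
      _ ≤ ((K : ℝ)⁻¹) ^ 2 * (∑ k, Lhat * ‖D i k ω‖) ^ 2 :=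
          mul_le_mul_of_nonneg_left (pow_le_pow_left₀ (norm_nonneg _) h1 2) (by positivity)
      _ ≤ ((K : ℝ)⁻¹) ^ 2 * ((K : ℝ) * ∑ k, (Lhat * ‖D i k ω‖) ^ 2) :=
          mul_le_mul_of_nonneg_left h2 (by positivity)
      _ = Lhat ^ 2 / K * ∑ k, ‖D i k ω‖ ^ 2 := by
          simp_rw [mul_pow]
          rw [← Finset.mul_sum]
          field_simp
  have hint1 : Integrable (fun ω => Lhat ^ 2 / K * ∑ k, ‖D i k ω‖ ^ 2) P :=
    (integrable_finset_sum _ fun k _ => hDint2 k).const_mul _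
  have hmain : ∫ ω, ‖(K : ℝ)⁻¹ • ∑ k, (h k (W i k ω)
        - h k ((K : ℝ)⁻¹ • ∑ j, W i j ω))‖ ^ 2 ∂P ≤ Lhat ^ 2 / K * S i := by
    calc ∫ ω, ‖(K : ℝ)⁻¹ • ∑ k, (h k (W i k ω)
          - h k ((K : ℝ)⁻¹ • ∑ j, W i j ω))‖ ^ 2 ∂P
        ≤ ∫ ω, Lhat ^ 2 / K * ∑ k, ‖D i k ω‖ ^ 2 ∂P :=
          integral_mono (hdint i) hint1 hpt
      _ = Lhat ^ 2 / K * S i := by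
          rw [integral_const_mul, integral_finset_sum _ fun k _ => hDint2 k, hS]
  have hc1eq : c1 / (1 - lam2)
      = μ ^ 2 * (lam2 ^ 2 / (1 - lam2) ^ 2) * K * (Bhat ^ 2 + C ^ 2) := by
    rw [hc1]
    field_simp
  refine hmain.trans ?_
  rw [← hc1eq]
  exact mul_le_mul_of_nonneg_left (hSbound i) (by positivity)
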